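/- Let q be a prime power and n, m, d integers with n, m ≥ 1 and 0 ≤ d < m·q. Then the F_q-rank of the matrix EVAL^m(ℙF_q^{n-1}, W_{d,n}) equals |W_{d,n}| = C(d+n−1, n−1); that is, its columns are F_q-linearly independent. -/

import Mathlib

/-- The `j`-th (multivariate) Hasse derivative of `Q`, i.e. the coefficient of `z^j`
in the expansion `Q(x+z) = ∑_j Q^{(j)}(x)·z^j`. -/
noncomputable def mvHasseDeriv {F : Type*} [CommSemiring F] {n : ℕ} (j : Fin n →₀ ℕ)
    (Q : MvPolynomial (Fin n) F) : MvPolynomial (Fin n) F :=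
  ∑ v ∈ Q.support, MvPolynomial.monomial (v - j)
    (Q.coeff v * ((∏ i, (v i).choose (j i) : ℕ) : F))

/-- The columns of the matrix `EVAL^m(S, W_{d,n})`: the column of the degree-`d` monomial
with exponent vector `v` is the vector of evaluations `f^{(j)}(x)` over the rows `(x,j)`
with `x ∈ S` and `wt(j) < m`. -/
noncomputable def evalCol (F : Type) [Field F] (n m d : ℕ) (S : Finset (Fin n → F))
    (v : {v : Fin n →₀ ℕ // (v.sum fun _ e => e) = d})
    (r : {r : (Fin n → F) × (Fin n →₀ ℕ) // r.1 ∈ S ∧ (r.2.sum fun _ e => e) < m}) : F :=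
  MvPolynomial.eval r.1.1 (mvHasseDeriv r.1.2 (MvPolynomial.monomial v.1 (1 : F)))

/-! ### Auxiliary lemmas -/

section Aux

variable {F : Type*} [CommSemiring F] {n : ℕ}

lemma wt_eq_degree (j : Fin n →₀ ℕ) : (j.sum fun _ e => e) = j.degree := by
  rfl

lemma degree_def (v : Fin n →₀ ℕ) : v.degree = ∑ i ∈ v.support, v i := rfl

lemma degree_eq_sum_univ (v : Fin n →₀ ℕ) : v.degree = ∑ i, v i := by
  rw [degree_def]
  exact Finset.sum_subset (Finset.subset_univ _)
    (fun i _ hi => Finsupp.notMem_support_iff.mp hi)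

lemma degree_add' (u j : Fin n →₀ ℕ) : (u + j).degree = u.degree + j.degree := by
  simp [degree_eq_sum_univ, Finsupp.add_apply, Finset.sum_add_distrib]

lemma cons_add_cons (a b : ℕ) (f g : Fin n →₀ ℕ) :
    Finsupp.cons a f + Finsupp.cons b g = Finsupp.cons (a + b) (f + g) := by
  ext t
  refine Fin.cases ?_ (fun i => ?_) t <;>
    simp [Finsupp.add_apply, Finsupp.cons_zero, Finsupp.cons_succ]

lemma degree_cons (r : ℕ) (i : Fin n →₀ ℕ) :
    (Finsupp.cons r i).degree = r + i.degree := by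
  simp [degree_eq_sum_univ, Fin.sum_univ_succ, Finsupp.cons_zero, Finsupp.cons_succ]

lemma mvHasseDeriv_coeff (j : Fin n →₀ ℕ) (Q : MvPolynomial (Fin n) F) (u : Fin n →₀ ℕ) :
    (mvHasseDeriv j Q).coeff u
      = Q.coeff (u + j) * ((∏ i, ((u + j) i).choose (j i) : ℕ) : F) := by
  classical
  unfold mvHasseDeriv
  rw [MvPolynomial.coeff_sum, Finset.sum_eq_single (u + j)]
  · rw [add_tsub_cancel_right, MvPolynomial.coeff_monomial, if_pos rfl]
  · intro v _hv hne
    rw [MvPolynomial.coeff_monomial]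
    split_ifs with h
    · have hex : ∃ i, v i < j i := by
        by_contra hc
        push_neg at hc
        apply hne
        have hle : j ≤ v := Finsupp.le_def.mpr hc
        rw [← h, tsub_add_cancel_of_le hle]
      obtain ⟨i, hi⟩ := hex
      have hz : (∏ t, (v t).choose (j t)) = 0 :=
        Finset.prod_eq_zero (Finset.mem_univ i) (Nat.choose_eq_zero_of_lt hi)
      rw [hz, Nat.cast_zero, mul_zero]
    · rfl
  · intro hmem
    rw [MvPolynomial.notMem_support_iff] at hmem
    rw [hmem, zero_mul, map_zero, MvPolynomial.coeff_zero]

lemma mvHasseDeriv_zero (Q : MvPolynomial (Fin n) F) : mvHasseDeriv 0 Q = Q := by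
  ext u
  simp [mvHasseDeriv_coeff]

lemma mvHasseDeriv_zero_poly (j : Fin n →₀ ℕ) :
    mvHasseDeriv j (0 : MvPolynomial (Fin n) F) = 0 := by
  ext u
  simp [mvHasseDeriv_coeff]

/-- `P ↦ (mvHasseDeriv j P).eval x` as a linear map. -/
noncomputable def evalHasseLM (x : Fin n → F) (j : Fin n →₀ ℕ) :
    MvPolynomial (Fin n) F →ₗ[F] F where
  toFun P := MvPolynomial.eval x (mvHasseDeriv j P)
  map_add' p q := by
    show MvPolynomial.eval x (mvHasseDeriv j (p + q))
      = MvPolynomial.eval x (mvHasseDeriv j p) + MvPolynomial.eval x (mvHasseDeriv j q)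
    have : mvHasseDeriv j (p + q) = mvHasseDeriv j p + mvHasseDeriv j q := by
      ext u
      simp [mvHasseDeriv_coeff, MvPolynomial.coeff_add, add_mul]
    rw [this, map_add]
  map_smul' c p := by
    show MvPolynomial.eval x (mvHasseDeriv j (c • p))
      = (RingHom.id F) c • MvPolynomial.eval x (mvHasseDeriv j p)
    have : mvHasseDeriv j (c • p) = c • mvHasseDeriv j p := by
      ext u
      simp [mvHasseDeriv_coeff, MvPolynomial.coeff_smul, mul_assoc]
    rw [this]
    simp [MvPolynomial.smul_eval]

lemma isHomogeneous_of_forall (φ : MvPolynomial (Fin n) F) (e : ℕ)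
    (h : ∀ u : Fin n →₀ ℕ, φ.coeff u ≠ 0 → u.degree = e) : φ.IsHomogeneous e := by
  intro u hu
  have hw := DFunLike.congr_fun Finsupp.degree_eq_weight_one (u : Fin n →₀ ℕ)
  rw [show (Finsupp.weight 1) u = u.degree from hw.symm]
  exact h u hu

lemma mvHasseDeriv_isHomogeneous {φ : MvPolynomial (Fin n) F} {d : ℕ}
    (h : φ.IsHomogeneous d) (j : Fin n →₀ ℕ) (hj : j.degree ≤ d) :
    (mvHasseDeriv j φ).IsHomogeneous (d - j.degree) := by
  apply isHomogeneous_of_forall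
  intro u hu
  rw [mvHasseDeriv_coeff] at hu
  have h1 : φ.coeff (u + j) ≠ 0 := fun hz => hu (by rw [hz, zero_mul])
  have h2 : (u + j).degree = d := by
    by_contra hc
    exact h1 (h.coeff_eq_zero hc)
  rw [degree_add'] at h2
  omega

lemma mvHasseDeriv_eq_zero_of_lt {φ : MvPolynomial (Fin n) F} {d : ℕ}
    (h : φ.IsHomogeneous d) (j : Fin n →₀ ℕ) (hj : d < j.degree) :
    mvHasseDeriv j φ = 0 := by
  ext u
  rw [mvHasseDeriv_coeff, MvPolynomial.coeff_zero]
  have h2 : (u + j).degree ≠ d := by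
    rw [degree_add']
    omega
  rw [h.coeff_eq_zero h2, zero_mul]

lemma MvPolynomial.IsHomogeneous.eval_smul' {φ : MvPolynomial (Fin n) F} {e : ℕ}
    (h : φ.IsHomogeneous e) (c : F) (x : Fin n → F) :
    MvPolynomial.eval (c • x) φ = c ^ e * MvPolynomial.eval x φ := by
  rw [MvPolynomial.eval_eq, MvPolynomial.eval_eq, Finset.mul_sum]
  apply Finset.sum_congr rfl
  intro v hv
  have hdeg : v.degree = e := by
    by_contra hc
    exact MvPolynomial.mem_support_iff.mp hv (h.coeff_eq_zero hc)
  have : ∏ i ∈ v.support, (c • x) i ^ v i = c ^ e * ∏ i ∈ v.support, x i ^ v i := by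
    have h1 : ∀ i, (c • x) i ^ v i = c ^ v i * x i ^ v i := by
      intro i; rw [Pi.smul_apply, smul_eq_mul, mul_pow]
    rw [Finset.prod_congr rfl (fun i _ => h1 i), Finset.prod_mul_distrib,
      Finset.prod_pow_eq_pow_sum, ← degree_def, hdeg]
  rw [this]
  ring

end Aux

section FinSucc

variable {F : Type*} [CommSemiring F] {n : ℕ}

lemma finSuccEquiv_mvHasseDeriv_cons (P : MvPolynomial (Fin (n + 1)) F) (r : ℕ)
    (i : Fin n →₀ ℕ) (l : ℕ) :
    (MvPolynomial.finSuccEquiv F n (mvHasseDeriv (Finsupp.cons r i) P)).coeff l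
      = ((l + r).choose r) •
          mvHasseDeriv i ((MvPolynomial.finSuccEquiv F n P).coeff (l + r)) := by
  apply MvPolynomial.ext
  intro u
  rw [MvPolynomial.finSuccEquiv_coeff_coeff, mvHasseDeriv_coeff,
    MvPolynomial.coeff_smul, mvHasseDeriv_coeff, MvPolynomial.finSuccEquiv_coeff_coeff,
    cons_add_cons]
  have hprod : (∏ t, ((Finsupp.cons (l + r) (u + i)) t).choose ((Finsupp.cons r i) t))
      = (l + r).choose r * ∏ t, ((u + i) t).choose (i t) := by
    rw [Fin.prod_univ_succ]
    simp [Finsupp.cons_zero, Finsupp.cons_succ]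
  rw [hprod, nsmul_eq_mul]
  push_cast
  ring

end FinSucc

/-! ### The main vanishing theorem -/

theorem key_vanishing (F : Type) [Field F] [Fintype F] [DecidableEq F] :
    ∀ n, 1 ≤ n → ∀ m d : ℕ, 1 ≤ m → d < m * Fintype.card F →
      ∀ P : MvPolynomial (Fin n) F, P.IsHomogeneous d →
      (∀ x : Fin n → F, x ≠ 0 → ∀ j : Fin n →₀ ℕ, j.degree < m →
        MvPolynomial.eval x (mvHasseDeriv j P) = 0) → P = 0 := by
  intro n hn
  induction n, hn using Nat.le_induction with
  | base =>
    intro m d hm hd P hP hvan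
    have hone : (fun _ => (1 : F)) ≠ (0 : Fin 1 → F) := by
      intro h
      have := congrFun h 0
      simp at this
    have h1 : MvPolynomial.eval (fun _ => (1 : F)) P = 0 := by
      have := hvan (fun _ => 1) hone 0 (by simp; omega)
      rwa [mvHasseDeriv_zero] at this
    by_contra hP0
    obtain ⟨v₀, hv₀⟩ := MvPolynomial.ne_zero_iff.mp hP0
    have hdegs : ∀ w : Fin 1 →₀ ℕ, P.coeff w ≠ 0 → w 0 = d := by
      intro w hw
      have : w.degree = d := by
        by_contra hc
        exact hw (hP.coeff_eq_zero hc)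
      rw [degree_eq_sum_univ, Fin.sum_univ_one] at this
      exact this
    have hsupp : P.support = {v₀} := by
      apply Finset.eq_singleton_iff_unique_mem.mpr
      refine ⟨MvPolynomial.mem_support_iff.mpr hv₀, ?_⟩
      intro w hw
      have hw' := MvPolynomial.mem_support_iff.mp hw
      refine Finsupp.ext fun t => ?_
      have ht : t = 0 := Subsingleton.elim t 0
      rw [ht, hdegs w hw', hdegs v₀ hv₀]
    rw [MvPolynomial.eval_eq, hsupp, Finset.sum_singleton] at h1
    simp only [one_pow, Finset.prod_const_one, mul_one] at h1
    exact hv₀ h1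
  | succ n hn IH =>
    intro m d hm hd P hP hvan
    by_contra hP0
    set q := MvPolynomial.finSuccEquiv F n P with hq
    have hq0 : q ≠ 0 := by
      intro h
      apply hP0
      have := congrArg (MvPolynomial.finSuccEquiv F n).symm h
      rwa [AlgEquiv.symm_apply_apply, map_zero] at this
    set k := q.natDegree with hk
    set Pk := q.coeff k with hPkdef
    have hPk0 : Pk ≠ 0 := by
      have := Polynomial.leadingCoeff_ne_zero.mpr hq0
      rwa [Polynomial.leadingCoeff] at this
    have hkd : k ≤ d := by
      obtain ⟨u, hu⟩ := MvPolynomial.ne_zero_iff.mp hPk0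
      have hPc : P.coeff (Finsupp.cons k u) ≠ 0 := by
        rw [hPkdef, hq] at hu
        rwa [MvPolynomial.finSuccEquiv_coeff_coeff] at hu
      have hdeg : (Finsupp.cons k u).degree = d := by
        by_contra hc
        exact hPc (hP.coeff_eq_zero hc)
      rw [degree_cons] at hdeg
      omega
    have hPkhom : Pk.IsHomogeneous (d - k) :=
      hP.finSuccEquiv_coeff_isHomogeneous k (d - k) (by omega)
    set c := Fintype.card F with hc
    have hcpos : 0 < c := Fintype.card_pos
    set m' := m - k / c with hm'
    have hm'1 : 1 ≤ m' := by
      have : k / c < m := (Nat.div_lt_iff_lt_mul hcpos).mpr (lt_of_le_of_lt hkd hd)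
      omega
    have hd' : d - k < m' * c := by
      have h1 : k / c * c ≤ k := Nat.div_mul_le_self k c
      have h2 : m' * c = m * c - k / c * c := by
        rw [hm', Nat.sub_mul]
      omega
    have hclaim : ∀ a : Fin n → F, a ≠ 0 → ∀ i : Fin n →₀ ℕ, i.degree < m' →
        MvPolynomial.eval a (mvHasseDeriv i Pk) = 0 := by
      intro a ha i hi
      by_contra hne
      set s := i.degree with hs
      set g : Polynomial F :=
        (MvPolynomial.finSuccEquiv F n (mvHasseDeriv (Finsupp.cons 0 i) P)).map
          (MvPolynomial.eval a) with hg
      have hgcoeff : ∀ l, g.coeff l = MvPolynomial.eval a (mvHasseDeriv i (q.coeff l)) := by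
        intro l
        rw [hg, Polynomial.coeff_map, finSuccEquiv_mvHasseDeriv_cons]
        simp
        rfl
      have hgk : g.coeff k ≠ 0 := by rw [hgcoeff]; exact hne
      have hg0 : g ≠ 0 := fun h => hgk (by simp [h])
      have hgdeg : g.natDegree ≤ k := by
        apply Polynomial.natDegree_le_iff_coeff_eq_zero.mpr
        intro l hl
        rw [hgcoeff, Polynomial.coeff_eq_zero_of_natDegree_lt hl, mvHasseDeriv_zero_poly,
          map_zero]
      have hr : ∀ b : F, m ≤ Polynomial.rootMultiplicity b g + s := by
        intro b
        by_contra hlt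
        push_neg at hlt
        set r := Polynomial.rootMultiplicity b g with hrdef
        have hmap : (MvPolynomial.finSuccEquiv F n
              (mvHasseDeriv (Finsupp.cons r i) P)).map (MvPolynomial.eval a)
            = Polynomial.hasseDeriv r g := by
          ext l
          rw [Polynomial.coeff_map, finSuccEquiv_mvHasseDeriv_cons,
            Polynomial.hasseDeriv_coeff, hgcoeff]
          rw [nsmul_eq_mul, map_mul, map_natCast]
        have heval : MvPolynomial.eval (Fin.cons b a) (mvHasseDeriv (Finsupp.cons r i) P)
            ≠ 0 := by
          rw [MvPolynomial.eval_eq_eval_mv_eval', hmap]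
          obtain ⟨h1, hfac, hnd⟩ :=
            Polynomial.exists_eq_pow_rootMultiplicity_mul_and_not_dvd g hg0 b
          have htay : (Polynomial.hasseDeriv r g).eval b = h1.eval b := by
            rw [← Polynomial.taylor_coeff, hfac, Polynomial.taylor_mul]
            have hpow : Polynomial.taylor b ((Polynomial.X - Polynomial.C b) ^ r)
                = Polynomial.X ^ r := by
              rw [Polynomial.taylor_apply, Polynomial.pow_comp, Polynomial.sub_comp,
                Polynomial.X_comp, Polynomial.C_comp]
              simp
            rw [hpow]
            have : (Polynomial.X ^ r * Polynomial.taylor b h1).coeff (0 + r)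
                = (Polynomial.taylor b h1).coeff 0 := Polynomial.coeff_X_pow_mul _ _ _
            rw [zero_add] at this
            rw [this, Polynomial.taylor_coeff_zero]
          rw [htay]
          intro hz
          exact hnd (Polynomial.dvd_iff_isRoot.mpr hz)
        apply heval
        apply hvan
        · intro h0
          apply ha
          funext t
          have := congrFun h0 t.succ
          simpa [Fin.cons_succ] using this
        · rw [degree_cons]
          omega
      have hsum : c * (m - s) ≤ k := by
        calc c * (m - s) = ∑ _b : F, (m - s) := by
              rw [Finset.sum_const, Finset.card_univ, smul_eq_mul]
          _ ≤ ∑ b : F, Polynomial.rootMultiplicity b g := by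
              apply Finset.sum_le_sum
              intro b _
              have := hr b
              omega
          _ = ∑ b : F, g.roots.count b := by
              apply Finset.sum_congr rfl
              intro b _
              rw [Polynomial.count_roots]
          _ = ∑ b ∈ g.roots.toFinset, g.roots.count b := by
              refine (Finset.sum_subset (Finset.subset_univ _) ?_).symm
              intro x _ hx
              exact Multiset.count_eq_zero.mpr (fun h => hx (Multiset.mem_toFinset.mpr h))
          _ = Multiset.card g.roots := Multiset.toFinset_sum_count_eq _
          _ ≤ g.natDegree := Polynomial.card_roots' g
          _ ≤ k := hgdeg
      have hfin : m - s ≤ k / c := by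
        rw [Nat.le_div_iff_mul_le hcpos]
        rw [mul_comm] at hsum
        exact hsum
      omega
    exact hPk0 (IH m' (d - k) hm'1 hd' Pk hPkhom hclaim)

/- `Pr` plays the role of `ℙF_q^{n-1}` (a fixed set of representatives of the nonzero
vectors up to nonzero scalar multiples).  The conclusion: the columns of
`EVAL^m(ℙF_q^{n-1}, W_{d,n})` are linearly independent over `F_q`, so the rank is the
number `C(d+n−1, n−1)` of degree-`d` monomials. -/
theorem stmt16 (F : Type) [Field F] [Fintype F] [DecidableEq F] (n m d : ℕ)
    (hn : 1 ≤ n) (hm : 1 ≤ m) (hd : d < m * Fintype.card F)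
    (Pr : Finset (Fin n → F)) (hPr0 : ∀ u ∈ Pr, u ≠ 0)
    (hPr : ∀ u : Fin n → F, u ≠ 0 → ∃! w, w ∈ Pr ∧ ∃ c : Fˣ, u = (c : F) • w) :
    LinearIndependent F (evalCol F n m d Pr) ∧
    Module.finrank F (Submodule.span F (Set.range (evalCol F n m d Pr)))
      = (d + n - 1).choose (n - 1) := by
  classical
  have hLI : LinearIndependent F (evalCol F n m d Pr) := by
    rw [linearIndependent_iff]
    intro l hl
    set Q : MvPolynomial (Fin n) F := l.sum (fun v c => MvPolynomial.monomial v.1 c) with hQ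
    have hQcoeff : ∀ w : {v : Fin n →₀ ℕ // (v.sum fun _ e => e) = d},
        Q.coeff w.1 = l w := by
      intro w
      rw [hQ, Finsupp.sum, MvPolynomial.coeff_sum]
      have : ∀ v ∈ l.support, (MvPolynomial.monomial v.1 (l v)).coeff w.1
          = if v = w then l v else 0 := by
        intro v _
        rw [MvPolynomial.coeff_monomial]
        congr 1
        simp [Subtype.ext_iff]
      rw [Finset.sum_congr rfl this, Finset.sum_ite_eq' l.support w (fun v => l v)]
      split_ifs with h
      · rfl
      · exact (Finsupp.notMem_support_iff.mp h).symm
    have hQhom : Q.IsHomogeneous d := by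
      rw [hQ, Finsupp.sum]
      apply MvPolynomial.IsHomogeneous.sum
      intro v _
      apply MvPolynomial.isHomogeneous_monomial
      rw [← wt_eq_degree]
      exact v.2
    -- vanishing at the representatives
    have hvan : ∀ x ∈ Pr, ∀ j : Fin n →₀ ℕ, j.degree < m →
        MvPolynomial.eval x (mvHasseDeriv j Q) = 0 := by
      intro x hx j hj
      have hj' : (j.sum fun _ e => e) < m := by rwa [wt_eq_degree]
      have hrow := congrFun hl ⟨(x, j), hx, hj'⟩
      rw [Finsupp.linearCombination_apply] at hrow
      have : MvPolynomial.eval x (mvHasseDeriv j Q)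
          = (l.sum fun v c => c • evalCol F n m d Pr v) ⟨(x, j), hx, hj'⟩ := by
        rw [hQ]
        rw [show MvPolynomial.eval x (mvHasseDeriv j
            (l.sum fun v c => MvPolynomial.monomial v.1 c))
          = evalHasseLM x j (l.sum fun v c => MvPolynomial.monomial v.1 c) from rfl]
        rw [map_finsuppSum, Finsupp.sum, Finsupp.sum, Finset.sum_apply]
        apply Finset.sum_congr rfl
        intro v _
        have hmono : (MvPolynomial.monomial v.1 (l v) : MvPolynomial (Fin n) F)
            = l v • MvPolynomial.monomial v.1 (1 : F) := by
          rw [MvPolynomial.smul_monomial, smul_eq_mul, mul_one]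
        rw [hmono, map_smul, Pi.smul_apply]
        rfl
      rw [this, hrow]
      rfl
    -- vanishing at all nonzero points
    have hvan' : ∀ x : Fin n → F, x ≠ 0 → ∀ j : Fin n →₀ ℕ, j.degree < m →
        MvPolynomial.eval x (mvHasseDeriv j Q) = 0 := by
      intro x hx j hj
      obtain ⟨w, ⟨hwPr, cu, hxc⟩, _⟩ := hPr x hx
      rcases le_or_gt j.degree d with hle | hlt
      · have hhom := mvHasseDeriv_isHomogeneous hQhom j hle
        rw [hxc, hhom.eval_smul', hvan w hwPr j hj, mul_zero]
      · rw [mvHasseDeriv_eq_zero_of_lt hQhom j hlt, map_zero]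
    have hQ0 : Q = 0 := key_vanishing F n hn m d hm hd Q hQhom hvan'
    ext v
    rw [← hQcoeff v, hQ0, MvPolynomial.coeff_zero]
    rfl
  refine ⟨hLI, ?_⟩
  -- the index type is finite, with cardinality `C(d+n-1, n-1)`
  let e : {v : Fin n →₀ ℕ // (v.sum fun _ e => e) = d} ≃ Sym (Fin n) d :=
    { toFun := fun v => ⟨v.1.toMultiset, (Finsupp.card_toMultiset v.1).trans v.2⟩
      invFun := fun s => ⟨Multiset.toFinsupp s.1,
        (Multiset.toFinsupp_sum_eq s.1).trans s.2⟩
      left_inv := fun v => Subtype.ext (Finsupp.toMultiset_toFinsupp v.1)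
      right_inv := fun s => Subtype.ext (Multiset.toFinsupp_toMultiset s.1) }
  letI : Fintype {v : Fin n →₀ ℕ // (v.sum fun _ e => e) = d} := Fintype.ofEquiv _ e.symm
  rw [finrank_span_eq_card hLI]
  rw [Fintype.card_congr e, Sym.card_sym_eq_choose, Fintype.card_fin]
  have h1 : n + d - 1 = d + n - 1 := by omega
  have h2 : (d + n - 1).choose (n - 1) = (d + n - 1).choose d := by
    have := Nat.choose_symm (n := d + n - 1) (k := n - 1) (by omega)
    have h3 : d + n - 1 - (n - 1) = d := by omega
    rw [h3] at this
    exact this.symm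
  rw [h1, h2]
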